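/- Let Σ ∈ ℝ^{k×k} be positive definite, μ ∈ ℝ^k, and fix a coordinate j ∈ {1,…,k} with k ≥ 2. Then the partial derivative of the multivariate normal CDF Φ_{μ,Σ} with respect to the j-th coordinate at y ∈ ℝ^k equals the product of the univariate normal N(μ_j, Σ_{jj}) density evaluated at y_j and the CDF of the conditional normal distribution with mean μ_{−j} + Σ_{−j,j} Σ_{jj}^{−1}(y_j − μ_j) and covariance Σ_{−j,−j} − Σ_{−j,j} Σ_{jj}^{−1} Σ_{j,−j}, evaluated at y_{−j}. Here the subscript −j denotes deletion of the j-th coordinate (row/column). -/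

import Mathlib

open Matrix MeasureTheory

/-- Density of the multivariate normal distribution `N(μ, S)`. -/
noncomputable def mvnPdf {ι : Type} [Fintype ι] [DecidableEq ι]
    (μ : ι → ℝ) (S : Matrix ι ι ℝ) (x : ι → ℝ) : ℝ :=
  (2 * Real.pi) ^ (-(Fintype.card ι : ℝ) / 2) * S.det ^ (-(1 : ℝ) / 2) *
    Real.exp (-(1 / 2) * ((x - μ) ⬝ᵥ (S⁻¹ *ᵥ (x - μ))))

/-- CDF of the multivariate normal distribution. -/
noncomputable def mvnCdf {ι : Type} [Fintype ι] [DecidableEq ι]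
    (μ : ι → ℝ) (S : Matrix ι ι ℝ) (y : ι → ℝ) : ℝ :=
  ∫ x in Set.Iic y, mvnPdf μ S x

open Real Set Filter

set_option linter.unusedSectionVars false
set_option linter.unusedVariables false
set_option linter.unnecessarySimpa false

section Generic
variable {ι : Type} [Fintype ι] [DecidableEq ι]

lemma continuous_quadform (M : Matrix ι ι ℝ) : Continuous fun x : ι → ℝ => x ⬝ᵥ M *ᵥ x := by
  simp only [dotProduct, mulVec]
  exact continuous_finset_sum _ fun i _ =>
    (continuous_apply i).mul (continuous_finset_sum _ fun l _ =>
      continuous_const.mul (continuous_apply l))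

lemma continuous_mvnPdf (μ : ι → ℝ) (M : Matrix ι ι ℝ) : Continuous (mvnPdf μ M) := by
  unfold mvnPdf
  exact continuous_const.mul (Real.continuous_exp.comp
    (continuous_const.mul ((continuous_quadform M⁻¹).comp (continuous_id.sub continuous_const))))

lemma mvnPdf_nonneg (μ : ι → ℝ) (M : Matrix ι ι ℝ) (hd : 0 < M.det) (x : ι → ℝ) :
    0 ≤ mvnPdf μ M x := by
  unfold mvnPdf
  have h1 : (0:ℝ) < 2 * Real.pi := by positivity
  positivity

lemma posdef_coercive [Nonempty ι] {M : Matrix ι ι ℝ} (hM : M.PosDef) :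
    ∃ c > 0, ∀ v : ι → ℝ, c * (∑ i, v i ^ 2) ≤ v ⬝ᵥ M *ᵥ v := by
  have hpos : ∀ v : ι → ℝ, v ≠ 0 → 0 < v ⬝ᵥ M *ᵥ v := by
    intro v hv
    simpa using hM.dotProduct_mulVec_pos hv
  set K : Set (ι → ℝ) := {v | ∑ i, v i ^ 2 = 1} with hK
  have hKc : IsCompact K := by
    have hclosed : IsClosed K :=
      isClosed_eq (continuous_finset_sum _ fun i _ => (continuous_apply i).pow 2)
        continuous_const
    have hbdd : Bornology.IsBounded K := by
      apply (Metric.isBounded_closedBall (x := (0 : ι → ℝ)) (r := 1)).subset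
      intro v hv
      simp only [Metric.mem_closedBall, dist_zero_right]
      refine (pi_norm_le_iff_of_nonneg zero_le_one).2 fun i => ?_
      rw [Real.norm_eq_abs, abs_le_one_iff_mul_self_le_one, ← sq]
      calc v i ^ 2 ≤ ∑ l, v l ^ 2 :=
            Finset.single_le_sum (fun l _ => sq_nonneg (v l)) (Finset.mem_univ i)
        _ = 1 := hv
    exact Metric.isCompact_of_isClosed_isBounded hclosed hbdd
  have hKne : K.Nonempty := by
    refine ⟨Pi.single (Classical.arbitrary ι) 1, ?_⟩
    simp [hK, Pi.single_apply, sq]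
  obtain ⟨vm, hvm, hmin⟩ := hKc.exists_isMinOn hKne (continuous_quadform M).continuousOn
  have hvm0 : vm ≠ 0 := by
    intro h
    rw [h] at hvm
    simp [hK] at hvm
  refine ⟨vm ⬝ᵥ M *ᵥ vm, hpos vm hvm0, fun v => ?_⟩
  rcases eq_or_ne v 0 with rfl | hv
  · simp
  · have hsum : 0 < ∑ i, v i ^ 2 := by
      obtain ⟨i, hi⟩ := Function.ne_iff.1 hv
      exact Finset.sum_pos' (fun l _ => sq_nonneg _) ⟨i, Finset.mem_univ i, lt_of_le_of_ne (sq_nonneg _) (Ne.symm (pow_ne_zero 2 hi))⟩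
    set r : ℝ := Real.sqrt (∑ i, v i ^ 2) with hr
    have hrpos : 0 < r := Real.sqrt_pos.2 hsum
    have hr2 : r ^ 2 = ∑ i, v i ^ 2 := Real.sq_sqrt hsum.le
    have hu : (r⁻¹ • v) ∈ K := by
      simp only [hK, Set.mem_setOf_eq, Pi.smul_apply, smul_eq_mul, mul_pow, ← Finset.mul_sum]
      rw [← hr2]
      field_simp
    have hle : vm ⬝ᵥ M *ᵥ vm ≤ (r⁻¹ • v) ⬝ᵥ M *ᵥ (r⁻¹ • v) := hmin hu
    have hexp : (r⁻¹ • v) ⬝ᵥ M *ᵥ (r⁻¹ • v) = r⁻¹ * (r⁻¹ * (v ⬝ᵥ M *ᵥ v)) := by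
      rw [smul_dotProduct, mulVec_smul, dotProduct_smul]
      simp [smul_eq_mul, mul_assoc]
    rw [hexp] at hle
    have := mul_le_mul_of_nonneg_left hle (le_of_lt (by positivity : (0:ℝ) < r ^ 2))
    calc (vm ⬝ᵥ M *ᵥ vm) * (∑ i, v i ^ 2) = r ^ 2 * (vm ⬝ᵥ M *ᵥ vm) := by rw [hr2]; ring
      _ ≤ r ^ 2 * (r⁻¹ * (r⁻¹ * (v ⬝ᵥ M *ᵥ v))) := this
      _ = v ⬝ᵥ M *ᵥ v := by field_simp

theorem integrable_mvnPdf [Nonempty ι] (μ : ι → ℝ) {M : Matrix ι ι ℝ} (hM : M.PosDef) :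
    Integrable (mvnPdf μ M) := by
  obtain ⟨c, hc, hbound⟩ := posdef_coercive hM.inv
  set K : ℝ := (2 * Real.pi) ^ (-(Fintype.card ι : ℝ) / 2) * M.det ^ (-(1 : ℝ) / 2) with hKdef
  have hKpos : 0 < K := by
    have h1 : (0:ℝ) < 2 * Real.pi := by positivity
    have h2 : (0:ℝ) < M.det := hM.det_pos
    positivity
  have hdom : Integrable (fun x : ι → ℝ => K * ∏ i, rexp (-(c/2) * (x i - μ i)^2)) := by
    apply Integrable.const_mul
    apply Integrable.fintype_prod (f := fun i (v : ℝ) => rexp (-(c/2) * (v - μ i)^2))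
    intro i
    exact (integrable_exp_neg_mul_sq (by positivity)).comp_sub_right (μ i)
  apply hdom.mono' (continuous_mvnPdf μ M).aestronglyMeasurable
  filter_upwards with x
  have hprod : ∏ i, rexp (-(c/2) * (x i - μ i)^2) = rexp (∑ i, -(c/2) * (x i - μ i)^2) :=
    (Real.exp_sum _ _).symm
  have hq : c * (∑ i, (x i - μ i) ^ 2) ≤ (x - μ) ⬝ᵥ M⁻¹ *ᵥ (x - μ) := by
    simpa using hbound (x - μ)
  have hsum : ∑ i, -(c/2) * (x i - μ i)^2 = -(1/2) * (c * ∑ i, (x i - μ i)^2) := by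
    rw [Finset.mul_sum, Finset.mul_sum]
    congr 1; ext i; ring
  have hexp : -(1/2 : ℝ) * ((x - μ) ⬝ᵥ M⁻¹ *ᵥ (x - μ)) ≤ ∑ i, -(c/2) * (x i - μ i)^2 := by
    rw [hsum]
    have := mul_le_mul_of_nonpos_left hq (by norm_num : -(1/2 : ℝ) ≤ 0)
    linarith
  rw [Real.norm_eq_abs]
  unfold mvnPdf
  rw [← hKdef, abs_of_nonneg (by positivity), hprod]
  exact mul_le_mul_of_nonneg_left (Real.exp_le_exp.2 hexp) hKpos.le

end Generic

section Generic2
variable {ι : Type} [Fintype ι] [DecidableEq ι]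

theorem continuous_mvnCdfAux (g : (ι → ℝ) → ℝ) (hg : Integrable g) :
    Continuous fun u : ι → ℝ => ∫ x in Set.Iic u, g x := by
  rw [continuous_iff_continuousAt]
  intro u₀
  have hrw : ∀ u : ι → ℝ, ∫ x in Set.Iic u, g x = ∫ x, (Set.Iic u).indicator g x :=
    fun u => (integral_indicator measurableSet_Iic).symm
  simp only [ContinuousAt, hrw]
  apply tendsto_integral_filter_of_dominated_convergence (fun x => ‖g x‖)
  · exact Eventually.of_forall fun u =>
      hg.aestronglyMeasurable.indicator measurableSet_Iic
  · exact Eventually.of_forall fun u =>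
      Eventually.of_forall fun x => norm_indicator_le_norm_self g x
  · exact hg.norm
  · have hae : ∀ᵐ x : ι → ℝ, ∀ i, x i ≠ u₀ i := by
      rw [ae_all_iff]
      intro i
      rw [volume_pi]
      exact Measure.ae_eval_ne (fun _ : ι => (volume : Measure ℝ)) i (u₀ i)
    filter_upwards [hae] with x hx
    by_cases hmem : x ∈ Set.Iic u₀
    · have hlt : ∀ i, x i < u₀ i := fun i => lt_of_le_of_ne (hmem i) (hx i)
      have hU : IsOpen {u : ι → ℝ | ∀ i, x i < u i} := by
        have : {u : ι → ℝ | ∀ i, x i < u i} = ⋂ i, (fun u : ι → ℝ => u i) ⁻¹' Set.Ioi (x i) := by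
          ext; simp
        rw [this]
        exact isOpen_iInter_of_finite fun i => (continuous_apply i).isOpen_preimage _ isOpen_Ioi
      have hmem' : u₀ ∈ {u : ι → ℝ | ∀ i, x i < u i} := hlt
      have hval : (Set.Iic u₀).indicator g x = g x :=
        Set.indicator_of_mem hmem g
      rw [hval]
      refine Tendsto.congr' ?_ (tendsto_const_nhds (x := g x))
      filter_upwards [hU.mem_nhds hmem'] with u hu
      exact (Set.indicator_of_mem (show x ∈ Set.Iic u from fun i => (hu i).le) g).symm
    · obtain ⟨i₀, hi₀⟩ : ∃ i, ¬ x i ≤ u₀ i := by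
        by_contra h; push_neg at h; exact hmem h
      have hgt : u₀ i₀ < x i₀ := not_le.1 hi₀
      have hU : IsOpen {u : ι → ℝ | u i₀ < x i₀} :=
        (continuous_apply i₀).isOpen_preimage _ isOpen_Iio
      have h0 : (Set.Iic u₀).indicator g x = 0 := Set.indicator_of_notMem hmem g
      rw [h0]
      refine Tendsto.congr' ?_ (tendsto_const_nhds (x := (0:ℝ)))
      filter_upwards [hU.mem_nhds hgt] with u hu
      refine (Set.indicator_of_notMem ?_ g).symm
      intro hle
      exact absurd (hle i₀) (not_le.2 hu)


theorem setIntegral_Iic_translate (g : (ι → ℝ) → ℝ) (c u : ι → ℝ) :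
    ∫ x in Set.Iic u, g (x - c) = ∫ x in Set.Iic (u - c), g x := by
  have hmp : MeasurePreserving (fun x : ι → ℝ => x + c) volume volume :=
    measurePreserving_add_right volume c
  have hemb : MeasurableEmbedding (fun x : ι → ℝ => x + c) :=
    (MeasurableEquiv.addRight c).measurableEmbedding
  have h2 := hmp.setIntegral_preimage_emb hemb (fun y => g (y - c)) (Set.Iic u)
  have hset : (fun x : ι → ℝ => x + c) ⁻¹' Set.Iic u = Set.Iic (u - c) := by
    ext z
    simp only [Set.mem_preimage, Set.mem_Iic, Pi.le_def]
    constructor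
    · intro h i; have := h i; simp only [Pi.add_apply, Pi.sub_apply] at *; linarith
    · intro h i; have := h i; simp only [Pi.add_apply, Pi.sub_apply] at *; linarith
  rw [hset] at h2
  rw [← h2]
  apply setIntegral_congr_fun measurableSet_Iic
  intro z _
  simp
end Generic2

section Block
variable {k : ℕ}

noncomputable def condCov (S : Matrix (Fin k) (Fin k) ℝ) (j : Fin k) :
    Matrix {i : Fin k // i ≠ j} {i : Fin k // i ≠ j} ℝ :=
  Matrix.of fun a b => S a.1 b.1 - S a.1 j * (S j j)⁻¹ * S j b.1

noncomputable def condMean (μ : Fin k → ℝ) (S : Matrix (Fin k) (Fin k) ℝ) (j : Fin k) (t : ℝ) :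
    {i : Fin k // i ≠ j} → ℝ :=
  fun i => μ i.1 + S i.1 j * (S j j)⁻¹ * (t - μ j)

instance uniqueEqSub (j : Fin k) : Unique {i : Fin k // i = j} :=
  ⟨⟨⟨j, rfl⟩⟩, fun i => Subtype.ext i.2⟩

def sumEquiv (j : Fin k) : {i : Fin k // i = j} ⊕ {i : Fin k // i ≠ j} ≃ Fin k :=
  Equiv.sumCompl _

def blkA (S : Matrix (Fin k) (Fin k) ℝ) (j : Fin k) :
    Matrix {i : Fin k // i = j} {i : Fin k // i = j} ℝ := of fun _ _ => S j j
def blkB (S : Matrix (Fin k) (Fin k) ℝ) (j : Fin k) :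
    Matrix {i : Fin k // i = j} {i : Fin k // i ≠ j} ℝ := of fun _ b => S j b.1
def blkC (S : Matrix (Fin k) (Fin k) ℝ) (j : Fin k) :
    Matrix {i : Fin k // i ≠ j} {i : Fin k // i = j} ℝ := of fun a _ => S a.1 j
def blkD (S : Matrix (Fin k) (Fin k) ℝ) (j : Fin k) :
    Matrix {i : Fin k // i ≠ j} {i : Fin k // i ≠ j} ℝ := of fun a b => S a.1 b.1

lemma submatrix_eq_fromBlocks (S : Matrix (Fin k) (Fin k) ℝ) (j : Fin k) :
    S.submatrix (sumEquiv j) (sumEquiv j) =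
      fromBlocks (blkA S j) (blkB S j) (blkC S j) (blkD S j) := by
  ext x y
  cases x with
  | inl u =>
    obtain ⟨u, rfl⟩ := u
    cases y with
    | inl w => obtain ⟨w, rfl⟩ := w; simp [_root_.sumEquiv, blkA, fromBlocks]
    | inr w => simp [_root_.sumEquiv, blkB, fromBlocks]
  | inr u =>
    cases y with
    | inl w => obtain ⟨w, rfl⟩ := w; simp [_root_.sumEquiv, blkC, fromBlocks]
    | inr w => simp [_root_.sumEquiv, blkD, fromBlocks]

noncomputable def blkAInvertible (S : Matrix (Fin k) (Fin k) ℝ) (j : Fin k) (hj : S j j ≠ 0) :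
    Invertible (blkA S j) := by
  refine ⟨of fun _ _ => (S j j)⁻¹, ?_, ?_⟩ <;>
  · ext a b
    have hab : a = b := Subsingleton.elim a b
    subst hab
    simp [mul_apply, blkA, Fintype.sum_unique, one_apply_eq,
      inv_mul_cancel₀ hj, mul_inv_cancel₀ hj]

lemma schur_eq (S : Matrix (Fin k) (Fin k) ℝ) (j : Fin k) (hj : S j j ≠ 0) :
    blkD S j - blkC S j * (blkA S j)⁻¹ * blkB S j = condCov S j := by
  letI := blkAInvertible S j hj
  rw [← invOf_eq_nonsing_inv]
  ext a b
  show blkD S j a b - (blkC S j * ⅟(blkA S j) * blkB S j) a b = _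
  have hinv : (⅟(blkA S j) : Matrix _ _ ℝ) = of fun _ _ => (S j j)⁻¹ := rfl
  rw [hinv]
  simp [mul_apply, Fintype.sum_unique, blkB, blkC, blkD, condCov]

lemma posDef_Sjj {S : Matrix (Fin k) (Fin k) ℝ} (hS : S.PosDef) (j : Fin k) : 0 < S j j := by
  have := hS.dotProduct_mulVec_pos (x := Pi.single j 1) (by
    intro h
    have := congrFun h j
    simp [Pi.single_apply] at this)
  simpa [dotProduct, mulVec, Pi.single_apply, Finset.sum_ite_eq', mul_comm] using this

lemma det_split {S : Matrix (Fin k) (Fin k) ℝ} (hS : S.PosDef) (j : Fin k) :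
    S.det = S j j * (condCov S j).det := by
  letI := blkAInvertible S j (posDef_Sjj hS j).ne'
  have h1 : S.det = (S.submatrix (sumEquiv j) (sumEquiv j)).det :=
    (det_submatrix_equiv_self (sumEquiv j) S).symm
  rw [h1, submatrix_eq_fromBlocks, det_fromBlocks₁₁, det_unique]
  have h2 : blkD S j - blkC S j * ⅟(blkA S j) * blkB S j = condCov S j := by
    rw [invOf_eq_nonsing_inv]
    exact schur_eq S j (posDef_Sjj hS j).ne'
  rw [h2]
  rfl

lemma blkC_eq (S : Matrix (Fin k) (Fin k) ℝ) (hS : S.PosDef) (j : Fin k) :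
    blkC S j = (blkB S j)ᴴ := by
  ext a u
  show S a.1 j = star (S j a.1)
  rw [hS.1.apply]

lemma posDef_condCov {S : Matrix (Fin k) (Fin k) ℝ} (hS : S.PosDef) (j : Fin k) :
    (condCov S j).PosDef := by
  have hj : 0 < S j j := posDef_Sjj hS j
  letI := blkAInvertible S j hj.ne'
  have hApos : (blkA S j).PosDef := by
    refine Matrix.PosDef.of_dotProduct_mulVec_pos ?_ ?_
    · ext a b
      have : a = b := Subsingleton.elim a b
      subst this
      simp [blkA]
    · intro x hx
      have hxd : x default ≠ 0 := by
        intro h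
        apply hx
        funext u
        have : u = default := Subsingleton.elim _ _
        rw [this]; exact h
      have : star x ⬝ᵥ blkA S j *ᵥ x = S j j * (x default * x default) := by
        simp [dotProduct, mulVec, Fintype.sum_unique, blkA]
        ring
      rw [this]
      exact mul_pos hj (mul_self_pos.mpr hxd)
  have h2 : blkD S j - (blkB S j)ᴴ * (blkA S j)⁻¹ * blkB S j = condCov S j := by
    rw [← blkC_eq S hS j]
    exact schur_eq S j hj.ne'
  have hsemi : (condCov S j).PosSemidef := by
    have hfb : (fromBlocks (blkA S j) (blkB S j) (blkB S j)ᴴ (blkD S j)).PosSemidef := by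
      rw [← blkC_eq S hS j, ← submatrix_eq_fromBlocks]
      exact hS.posSemidef.submatrix _
    have := (Matrix.PosDef.fromBlocks₁₁ (blkB S j) (blkD S j) hApos).1 hfb
    rwa [h2] at this
  have hdet : (condCov S j).det ≠ 0 := by
    have h := det_split hS j
    have hpos : 0 < S.det := hS.det_pos
    intro h0
    rw [h, h0, mul_zero] at hpos
    exact lt_irrefl _ hpos
  refine Matrix.PosDef.of_dotProduct_mulVec_pos hsemi.1 fun x hx => ?_
  rcases lt_or_eq_of_le (hsemi.dotProduct_mulVec_nonneg x) with h | h
  · exact h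
  · exfalso
    apply hx
    have hC0 : condCov S j *ᵥ x = 0 := (hsemi.dotProduct_mulVec_zero_iff x).1 h.symm
    have hxx : (condCov S j)⁻¹ *ᵥ (condCov S j *ᵥ x) = x := by
      rw [mulVec_mulVec, nonsing_inv_mul _ (isUnit_iff_ne_zero.2 hdet), one_mulVec]
    rw [hC0, mulVec_zero] at hxx
    exact hxx.symm
lemma sum_split (j : Fin k) (f : Fin k → ℝ) :
    ∑ l, f l = f j + ∑ c : {i : Fin k // i ≠ j}, f c.1 := by
  rw [← Equiv.sum_comp (sumEquiv j) f, Fintype.sum_sum_type]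
  simp only [_root_.sumEquiv, Fintype.sum_unique, Equiv.sumCompl_apply_inl, Equiv.sumCompl_apply_inr]
  rfl

lemma quadform_split {S : Matrix (Fin k) (Fin k) ℝ} (hS : S.PosDef) (j : Fin k) (v : Fin k → ℝ) :
    v ⬝ᵥ S⁻¹ *ᵥ v =
      v j * (S j j)⁻¹ * v j +
        (fun i : {i : Fin k // i ≠ j} => v i.1 - S i.1 j * (S j j)⁻¹ * v j) ⬝ᵥ
          ((condCov S j)⁻¹ *ᵥ fun i : {i : Fin k // i ≠ j} => v i.1 - S i.1 j * (S j j)⁻¹ * v j) := by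
  have hj : 0 < S j j := posDef_Sjj hS j
  have hjne : S j j ≠ 0 := hj.ne'
  have hSdet : IsUnit S.det := isUnit_iff_ne_zero.2 hS.det_pos.ne'
  have hsym : ∀ i l : Fin k, S i l = S l i := fun i l => by
    simpa using (hS.1.apply i l).symm
  set u : Fin k → ℝ := S⁻¹ *ᵥ v with hu
  have hv : S *ᵥ u = v := by
    rw [hu, mulVec_mulVec, mul_nonsing_inv _ hSdet, one_mulVec]
  have hΔdet : IsUnit (condCov S j).det :=
    isUnit_iff_ne_zero.2 (posDef_condCov hS j).det_pos.ne'
  set uy : {i : Fin k // i ≠ j} → ℝ := fun b => u b.1 with huy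
  set w : {i : Fin k // i ≠ j} → ℝ := fun i => v i.1 - S i.1 j * (S j j)⁻¹ * v j with hw
  have hvco : ∀ i : Fin k, v i = S i j * u j + ∑ c : {i : Fin k // i ≠ j}, S i c.1 * uy c := by
    intro i
    conv_lhs => rw [← hv]
    show ∑ l, S i l * u l = _
    rw [sum_split j (fun l => S i l * u l)]
  have hwΔ : w = condCov S j *ᵥ uy := by
    funext b
    show v b.1 - S b.1 j * (S j j)⁻¹ * v j = ∑ c, condCov S j b c * uy c
    have e1 : ∑ c, condCov S j b c * uy c =
        (∑ c, S b.1 c.1 * uy c) - S b.1 j * (S j j)⁻¹ * (∑ c, S j c.1 * uy c) := by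
      simp only [condCov, Matrix.of_apply, sub_mul]
      rw [Finset.sum_sub_distrib, Finset.mul_sum]
      congr 1
      apply Finset.sum_congr rfl
      intro c _
      ring
    rw [e1, hvco b.1, hvco j]
    field_simp
    ring
  have lhs_eq : v ⬝ᵥ S⁻¹ *ᵥ v = u j * v j + ∑ b : {i : Fin k // i ≠ j}, uy b * v b.1 := by
    show v ⬝ᵥ u = _
    rw [dotProduct_comm]
    show ∑ l, u l * v l = _
    rw [sum_split j (fun l => u l * v l)]
  have rhs2 : w ⬝ᵥ ((condCov S j)⁻¹ *ᵥ w) = ∑ b : {i : Fin k // i ≠ j}, uy b * w b := by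
    conv_lhs => rw [hwΔ]
    rw [mulVec_mulVec, nonsing_inv_mul _ hΔdet, one_mulVec, dotProduct_comm, ← hwΔ]
    rfl
  rw [lhs_eq, rhs2]
  have e2 : ∑ b : {i : Fin k // i ≠ j}, uy b * w b =
      (∑ b : {i : Fin k // i ≠ j}, uy b * v b.1) -
        (S j j)⁻¹ * v j * (∑ b : {i : Fin k // i ≠ j}, S j b.1 * uy b) := by
    simp only [hw, mul_sub]
    rw [Finset.sum_sub_distrib, Finset.mul_sum]
    congr 1
    apply Finset.sum_congr rfl
    intro b _
    rw [hsym b.1 j]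
    ring
  rw [e2]
  have hsv : ∑ b : {i : Fin k // i ≠ j}, S j b.1 * uy b = v j - S j j * u j := by
    rw [hvco j]
    ring
  rw [hsv]
  field_simp
  ring

lemma card_ne (hk : 2 ≤ k) (j : Fin k) :
    Fintype.card {i : Fin k // i ≠ j} = k - 1 := by
  have := Fintype.card_subtype_compl (fun i : Fin k => i = j)
  simpa [Fintype.card_subtype_eq] using this

lemma nonempty_ne (hk : 2 ≤ k) (j : Fin k) : Nonempty {i : Fin k // i ≠ j} := by
  have h1 : 1 < Fintype.card (Fin k) := by simp only [Fintype.card_fin]; omega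
  obtain ⟨i, hi⟩ := Fintype.exists_ne_of_one_lt_card h1 j
  exact ⟨⟨i, hi⟩⟩

lemma mvnPdf_factor (hk : 2 ≤ k) {S : Matrix (Fin k) (Fin k) ℝ} (hS : S.PosDef)
    (μ : Fin k → ℝ) (j : Fin k) (x : Fin k → ℝ) :
    mvnPdf μ S x =
      ((Real.sqrt (2 * Real.pi * S j j))⁻¹ * rexp (-((x j - μ j) ^ 2) / (2 * S j j))) *
        mvnPdf (condMean μ S j (x j)) (condCov S j) (fun i => x i.1) := by
  have hj : 0 < S j j := posDef_Sjj hS j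
  have hΔ : (condCov S j).PosDef := posDef_condCov hS j
  have h2pi : (0:ℝ) < 2 * Real.pi := by positivity
  have hcard' : (Fintype.card {i : Fin k // i ≠ j} : ℝ) = (k : ℝ) - 1 := by
    rw [card_ne hk j]
    rw [Nat.cast_sub (by omega : 1 ≤ k)]
    norm_num
  unfold mvnPdf
  have hwp : ((fun i : {i : Fin k // i ≠ j} => x i.1) - condMean μ S j (x j)) =
      (fun i : {i : Fin k // i ≠ j} => (x - μ) i.1 - S i.1 j * (S j j)⁻¹ * (x - μ) j) := by
    funext i
    simp [condMean]
    ring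
  rw [hwp, quadform_split hS j (x - μ), det_split hS j, hcard']
  simp only [Pi.sub_apply, Fintype.card_fin]
  set Q : ℝ := (fun i : {i : Fin k // i ≠ j} => x i.1 - μ i.1 - S i.1 j * (S j j)⁻¹ * (x j - μ j)) ⬝ᵥ
      ((condCov S j)⁻¹ *ᵥ fun i : {i : Fin k // i ≠ j} => x i.1 - μ i.1 - S i.1 j * (S j j)⁻¹ * (x j - μ j)) with hQ
  set s : ℝ := x j - μ j with hs
  have e1 : (2 * Real.pi : ℝ) ^ (-(k:ℝ)/2 : ℝ) =
      (2 * Real.pi) ^ (-(1:ℝ)/2) * (2 * Real.pi) ^ (-((k:ℝ)-1)/2) := by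
    rw [← Real.rpow_add h2pi]
    congr 1
    ring
  have e2 : (S j j * (condCov S j).det) ^ (-(1:ℝ)/2) =
      (S j j) ^ (-(1:ℝ)/2) * ((condCov S j).det) ^ (-(1:ℝ)/2) :=
    Real.mul_rpow hj.le hΔ.det_pos.le
  have e3 : (Real.sqrt (2 * Real.pi * S j j))⁻¹ =
      (2 * Real.pi) ^ (-(1:ℝ)/2) * (S j j) ^ (-(1:ℝ)/2) := by
    rw [← Real.mul_rpow h2pi.le hj.le]
    rw [show (-(1:ℝ)/2) = -(1/2) by ring]
    rw [Real.rpow_neg (by positivity)]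
    congr 1
    rw [Real.sqrt_eq_rpow]
  have e4 : rexp (-(1/2:ℝ) * (s * (S j j)⁻¹ * s + Q)) =
      rexp (-(s^2)/(2 * S j j)) * rexp (-(1/2:ℝ) * Q) := by
    rw [← Real.exp_add]
    congr 1
    field_simp
    ring
  rw [e1, e2, e3, e4]
  ring

end Block

theorem cdf_split {k : ℕ} (hk : 2 ≤ k) {S : Matrix (Fin k) (Fin k) ℝ} (hS : S.PosDef)
    (μ : Fin k → ℝ) (j : Fin k) (y : Fin k → ℝ) (t : ℝ) :
    mvnCdf μ S (Function.update y j t) =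
      ∫ s in Set.Iic t,
        ((Real.sqrt (2 * Real.pi * S j j))⁻¹ * rexp (-((s - μ j) ^ 2) / (2 * S j j))) *
          mvnCdf (condMean μ S j s) (condCov S j) (fun i : {i : Fin k // i ≠ j} => y i.1) := by
  haveI : Nonempty {i : Fin k // i ≠ j} := nonempty_ne hk j
  haveI : Nonempty (Fin k) := ⟨j⟩
  set φ : ((Fin k) → ℝ) ≃ᵐ ({i : Fin k // i = j} → ℝ) × ({i : Fin k // ¬ i = j} → ℝ) :=
    MeasurableEquiv.piEquivPiSubtypeProd (fun _ : Fin k => ℝ) (fun i => i = j) with hφdef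
  set ψ : (({i : Fin k // i = j} → ℝ) × ({i : Fin k // ¬ i = j} → ℝ)) ≃ᵐ
      (ℝ × ({i : Fin k // i ≠ j} → ℝ)) :=
    (MeasurableEquiv.funUnique {i : Fin k // i = j} ℝ).prodCongr
      (MeasurableEquiv.refl ({i : Fin k // i ≠ j} → ℝ)) with hψdef
  set χ := φ.trans ψ with hχdef
  have hφ : MeasurePreserving φ volume volume := by
    convert volume_preserving_piEquivPiSubtypeProd (fun _ : Fin k => ℝ) (fun i => i = j) using 3
    all_goals congr 1
    exact Subsingleton.elim _ _
  have hψ : MeasurePreserving ψ volume volume := by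
    have h1 := (volume_preserving_funUnique {i : Fin k // i = j} ℝ).prod
      (MeasurePreserving.id (volume : Measure ({i : Fin k // i ≠ j} → ℝ)))
    rw [← Measure.volume_eq_prod, ← Measure.volume_eq_prod] at h1
    exact h1
  have hχ : MeasurePreserving χ volume volume := hψ.comp hφ
  have hχs : MeasurePreserving χ.symm volume volume := hχ.symm χ
  have hemb : MeasurableEmbedding (χ.symm : ℝ × ({i : Fin k // i ≠ j} → ℝ) → (Fin k → ℝ)) :=
    χ.symm.measurableEmbedding
  have happly : ∀ (s : ℝ) (z : {i : Fin k // i ≠ j} → ℝ) (i : Fin k),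
      χ.symm (s, z) i = if h : i = j then s else z ⟨i, h⟩ := by
    intro s z i
    rfl
  have hpre : (χ.symm) ⁻¹' (Set.Iic (Function.update y j t)) =
      Set.Iic t ×ˢ Set.Iic (fun i : {i : Fin k // i ≠ j} => y i.1) := by
    ext p
    obtain ⟨s, z⟩ := p
    simp only [Set.mem_preimage, Set.mem_Iic, Set.mem_prod, Pi.le_def]
    constructor
    · intro h
      refine ⟨?_, fun i => ?_⟩
      · have := h j
        rw [happly s z j] at this
        simpa [Function.update_self] using this
      · have := h i.1
        rw [happly s z i.1] at this
        simpa [Function.update_of_ne i.2, i.2] using this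
    · rintro ⟨h1, h2⟩ i
      rw [happly s z i]
      by_cases hij : i = j
      · subst hij
        rw [dif_pos rfl, Function.update_self]
        exact h1
      · rw [dif_neg hij, Function.update_of_ne hij]
        exact h2 ⟨i, hij⟩
  have hint : Integrable (fun p : ℝ × ({i : Fin k // i ≠ j} → ℝ) => mvnPdf μ S (χ.symm p))
      volume :=
    (hχs.integrable_comp_emb hemb).2 (integrable_mvnPdf μ hS)
  have hfac : ∀ (s : ℝ) (z : {i : Fin k // i ≠ j} → ℝ),
      mvnPdf μ S (χ.symm (s, z)) =
        ((Real.sqrt (2 * Real.pi * S j j))⁻¹ * rexp (-((s - μ j) ^ 2) / (2 * S j j))) *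
          mvnPdf (condMean μ S j s) (condCov S j) z := by
    intro s z
    rw [mvnPdf_factor hk hS μ j (χ.symm (s, z))]
    have h1 : χ.symm (s, z) j = s := by rw [happly]; simp
    have h2 : (fun i : {i : Fin k // i ≠ j} => χ.symm (s, z) i.1) = z := by
      funext i
      rw [happly]
      simp [i.2]
    rw [h1, h2]
  have step1 : mvnCdf μ S (Function.update y j t) =
      ∫ p in Set.Iic t ×ˢ Set.Iic (fun i : {i : Fin k // i ≠ j} => y i.1),
        mvnPdf μ S (χ.symm p) := by
    unfold mvnCdf
    rw [← hχs.setIntegral_preimage_emb hemb (mvnPdf μ S) (Set.Iic (Function.update y j t)),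
      hpre]
  rw [step1]
  have step2 : ∫ p in Set.Iic t ×ˢ Set.Iic (fun i : {i : Fin k // i ≠ j} => y i.1),
      mvnPdf μ S (χ.symm p) =
      ∫ s in Set.Iic t, ∫ z in Set.Iic (fun i : {i : Fin k // i ≠ j} => y i.1),
        mvnPdf μ S (χ.symm (s, z)) := by
    rw [Measure.volume_eq_prod]
    apply setIntegral_prod
    rw [← Measure.volume_eq_prod]
    exact hint.integrableOn
  rw [step2]
  apply setIntegral_congr_fun measurableSet_Iic
  intro s _
  simp only [hfac]
  rw [integral_const_mul]
  rfl

/-- The partial derivative of the multivariate normal CDF `Φ_{μ,Σ}` with respect to the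
`j`-th coordinate equals the univariate `N(μⱼ, Σⱼⱼ)` density at `yⱼ` times the CDF of the
conditional normal distribution of the remaining coordinates given the `j`-th one,
evaluated at `y₋ⱼ`. -/
theorem mvnCdf_partialDeriv {k : ℕ} (hk : 2 ≤ k)
    (S : Matrix (Fin k) (Fin k) ℝ) (hS : S.PosDef)
    (μ : Fin k → ℝ) (j : Fin k) (y : Fin k → ℝ) :
    HasDerivAt (fun t => mvnCdf μ S (Function.update y j t))
      (((Real.sqrt (2 * Real.pi * S j j))⁻¹ *
          Real.exp (-((y j - μ j) ^ 2) / (2 * S j j))) *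
        mvnCdf
          (fun i : {i : Fin k // i ≠ j} => μ i.1 + S i.1 j * (S j j)⁻¹ * (y j - μ j))
          (Matrix.of fun a b : {i : Fin k // i ≠ j} =>
            S a.1 b.1 - S a.1 j * (S j j)⁻¹ * S j b.1)
          (fun i : {i : Fin k // i ≠ j} => y i.1))
      (y j) := by
  haveI : Nonempty {i : Fin k // i ≠ j} := nonempty_ne hk j
  have hj : 0 < S j j := posDef_Sjj hS j
  have hΔ : (condCov S j).PosDef := posDef_condCov hS j
  set y' : {i : Fin k // i ≠ j} → ℝ := fun i => y i.1 with hy'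
  set gauss : ℝ → ℝ := fun s =>
    (Real.sqrt (2 * Real.pi * S j j))⁻¹ * rexp (-((s - μ j) ^ 2) / (2 * S j j)) with hgauss
  set G : ℝ → ℝ := fun s => mvnCdf (condMean μ S j s) (condCov S j) y' with hG
  set H : ℝ → ℝ := fun s => gauss s * G s with hH
  have hint0 : Integrable (mvnPdf (0 : {i : Fin k // i ≠ j} → ℝ) (condCov S j)) :=
    integrable_mvnPdf _ hΔ
  have hGrw : ∀ s, G s = ∫ x in Set.Iic (y' - condMean μ S j s),
      mvnPdf 0 (condCov S j) x := by
    intro s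
    rw [hG]
    show (∫ x in Set.Iic y', mvnPdf (condMean μ S j s) (condCov S j) x) = _
    rw [← setIntegral_Iic_translate (mvnPdf 0 (condCov S j)) (condMean μ S j s) y']
    apply setIntegral_congr_fun measurableSet_Iic
    intro z _
    unfold mvnPdf
    simp only [sub_zero]
  have hmccont : ∀ i : {i : Fin k // i ≠ j}, Continuous fun s : ℝ => condMean μ S j s i :=
    fun i => continuous_const.add (continuous_const.mul
      ((continuous_id.sub continuous_const)))
  have hGcont : Continuous G := by
    have hcdf := continuous_mvnCdfAux _ hint0
    have hmc : Continuous fun s : ℝ => y' - condMean μ S j s := by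
      apply Continuous.sub continuous_const
      exact continuous_pi fun i => hmccont i
    exact (hcdf.comp hmc).congr fun s => (hGrw s).symm
  have hgausscont : Continuous gauss :=
    continuous_const.mul (Real.continuous_exp.comp (Continuous.div_const
      (Continuous.neg ((continuous_id.sub continuous_const).pow 2)) _))
  have hHcont : Continuous H := hgausscont.mul hGcont
  set K : ℝ := ∫ x, mvnPdf (0 : {i : Fin k // i ≠ j} → ℝ) (condCov S j) x with hK
  have hGbound : ∀ s, ‖G s‖ ≤ K := by
    intro s
    rw [hGrw s, Real.norm_eq_abs, abs_of_nonneg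
      (setIntegral_nonneg measurableSet_Iic fun x _ => mvnPdf_nonneg _ _ hΔ.det_pos x)]
    exact setIntegral_le_integral hint0
      (Filter.Eventually.of_forall fun x => mvnPdf_nonneg _ _ hΔ.det_pos x)
  have hgauss_nonneg : ∀ s, 0 ≤ gauss s := by
    intro s
    rw [hgauss]
    positivity
  have hgauss_int : Integrable gauss := by
    have hb : (0:ℝ) < (2 * S j j)⁻¹ := by positivity
    have h1 : Integrable fun s : ℝ => rexp (-(2 * S j j)⁻¹ * (s - μ j) ^ 2) :=
      (integrable_exp_neg_mul_sq hb).comp_sub_right (μ j)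
    have h2 : (fun s : ℝ => (Real.sqrt (2 * Real.pi * S j j))⁻¹ *
        rexp (-(2 * S j j)⁻¹ * (s - μ j) ^ 2)) = gauss := by
      funext s
      rw [hgauss]
      have he : -(2 * S j j)⁻¹ * (s - μ j) ^ 2 = -(s - μ j) ^ 2 / (2 * S j j) := by ring
      rw [he]
    rw [← h2]
    exact h1.const_mul _
  have hHint : Integrable H := by
    apply Integrable.mono' (hgauss_int.const_mul K) hHcont.aestronglyMeasurable
    filter_upwards with s
    rw [hH, norm_mul, Real.norm_eq_abs (gauss s), abs_of_nonneg (hgauss_nonneg s)]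
    calc gauss s * ‖G s‖ ≤ gauss s * K :=
          mul_le_mul_of_nonneg_left (hGbound s) (hgauss_nonneg s)
      _ = K * gauss s := by ring
  have hkey : ∀ u : ℝ, mvnCdf μ S (Function.update y j u) = ∫ s in Set.Iic u, H s := by
    intro u
    rw [cdf_split hk hS μ j y u]
  have hshift : ∀ u : ℝ, (∫ s in Set.Iic u, H s) =
      (∫ s in Set.Iic (y j), H s) + ∫ s in (y j)..u, H s := by
    intro u
    have h := intervalIntegral.integral_Iic_sub_Iic (f := H) (μ := volume)
      (a := y j) (b := u) hHint.integrableOn hHint.integrableOn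
    linarith
  have hderiv : HasDerivAt
      (fun u => (∫ s in Set.Iic (y j), H s) + ∫ s in (y j)..u, H s) (H (y j)) (y j) := by
    apply HasDerivAt.const_add
    exact intervalIntegral.integral_hasDerivAt_right hHint.intervalIntegrable
      hHcont.stronglyMeasurable.stronglyMeasurableAtFilter hHcont.continuousAt
  have heq : (fun u => mvnCdf μ S (Function.update y j u)) =
      fun u => (∫ s in Set.Iic (y j), H s) + ∫ s in (y j)..u, H s := by
    funext u
    rw [hkey u, hshift u]
  have hfin : HasDerivAt (fun t => mvnCdf μ S (Function.update y j t)) (H (y j)) (y j) := by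
    rw [heq]
    exact hderiv
  exact hfin
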